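/- Let d ≥ 2. Then for every N ≥ 1 one has 0 < ε_N < 1, and lim_{N→∞} ε_N = 0. -/

import Mathlib

open Matrix MeasureTheory
open scoped Kronecker BigOperators ENNReal ComplexOrder

noncomputable section

namespace SepPaper

/-- The rank-one operator `|ψ⟩⟨ψ|`. -/
def proj {n : Type*} (ψ : n → ℂ) : Matrix n n ℂ := Matrix.vecMulVec ψ (star ψ)

/-- `Λ` is a separable operator on `ℂ^{dA} ⊗ ℂ^{d}`: a finite conical combination of
pure product operators `|ψ⟩⟨ψ| ⊗ |φ⟩⟨φ|`. -/
def IsSeparable (dA d : ℕ) (Λ : Matrix (Fin dA × Fin d) (Fin dA × Fin d) ℂ) : Prop :=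
  ∃ (k : ℕ) (c : Fin k → ℝ) (ψ : Fin k → (Fin dA → ℂ)) (φ : Fin k → (Fin d → ℂ)),
    (∀ i, 0 ≤ c i) ∧
    Λ = ∑ i, (c i : ℂ) • (proj (ψ i) ⊗ₖ proj (φ i))

/-- Partial trace over the `B` system. -/
def trB {dA d : ℕ} (M : Matrix (Fin dA × Fin d) (Fin dA × Fin d) ℂ) :
    Matrix (Fin dA) (Fin dA) ℂ :=
  fun a a' => ∑ b : Fin d, M (a, b) (a', b)

/-- Index type of `ℋ_A ⊗ ℋ_B ⊗ ℋ_B^{⊗(N-1)} = ℋ_A ⊗ ℋ_B^{⊗N}` (for `N ≥ 1`). -/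
abbrev ExtIdx (dA d N : ℕ) := Fin dA × Fin d × (Fin (N - 1) → Fin d)

/-- The orthogonal projector onto the symmetric subspace of `(ℂ^d)^{⊗N}`,
realized as the average of all permutation operators. -/
def symProj (d N : ℕ) : Matrix (Fin N → Fin d) (Fin N → Fin d) ℂ :=
  (N.factorial : ℂ)⁻¹ •
    ∑ π : Equiv.Perm (Fin N), Matrix.of (fun f g => if (fun i => g (π i)) = f then (1 : ℂ) else 0)

/-- Identification of `ℂ^d ⊗ (ℂ^d)^{⊗(N-1)}` with `(ℂ^d)^{⊗((N-1)+1)}`. -/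
def bEquiv (d N : ℕ) : (Fin d × (Fin (N - 1) → Fin d)) ≃ (Fin (N - 1 + 1) → Fin d) :=
  Fin.consEquiv (fun _ => Fin d)

/-- The symmetric projector on the `N = (N-1)+1` copies of `ℂ^d`,
viewed on the index type `Fin d × (Fin (N-1) → Fin d)`. -/
def symProjB (d N : ℕ) : Matrix (Fin d × (Fin (N - 1) → Fin d)) (Fin d × (Fin (N - 1) → Fin d)) ℂ :=
  Matrix.reindex (bEquiv d N).symm (bEquiv d N).symm (symProj d (N - 1 + 1))

/-- Partial trace over the last `N-1` copies of `ℋ_B`. -/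
def ptraceExt {dA d N : ℕ} (M : Matrix (ExtIdx dA d N) (ExtIdx dA d N) ℂ) :
    Matrix (Fin dA × Fin d) (Fin dA × Fin d) ℂ :=
  fun p q => ∑ g : Fin (N - 1) → Fin d, M (p.1, p.2, g) (q.1, q.2, g)

/-- Membership in `𝒮^N`: existence of a positive semidefinite Bose-symmetric
`N`-extension. -/
def MemSN (dA d N : ℕ) (Λ : Matrix (Fin dA × Fin d) (Fin dA × Fin d) ℂ) : Prop :=
  ∃ Λext : Matrix (ExtIdx dA d N) (ExtIdx dA d N) ℂ,
    Λext.PosSemidef ∧ ptraceExt Λext = Λ ∧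
    Λext * ((1 : Matrix (Fin dA) (Fin dA) ℂ) ⊗ₖ symProjB d N) = Λext

/-- Partial transpose of an operator on `ℋ_A ⊗ ℋ_B^{⊗N}` w.r.t. the bipartition
`(A and the first ⌈N/2⌉ copies of B) | (the last ⌊N/2⌋ copies of B)`.
Copy `0` of `B` is the explicit factor and the extra copy `i : Fin (N-1)` is copy
`i+1`; copy `j` is transposed iff `⌈N/2⌉ = (N+1)/2 ≤ j`. -/
def pt {dA d N : ℕ} (M : Matrix (ExtIdx dA d N) (ExtIdx dA d N) ℂ) :
    Matrix (ExtIdx dA d N) (ExtIdx dA d N) ℂ :=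
  fun p q =>
    M (p.1, p.2.1, fun i => if (N + 1) / 2 ≤ (i : ℕ) + 1 then q.2.2 i else p.2.2 i)
      (q.1, q.2.1, fun i => if (N + 1) / 2 ≤ (i : ℕ) + 1 then p.2.2 i else q.2.2 i)

/-- Membership in `𝒮_p^N`: existence of a positive semidefinite Bose-symmetric
`N`-extension which is moreover PPT w.r.t. the bipartition
`A B^{⌈N/2⌉} | B^{⌊N/2⌋}`. -/
def MemSNp (dA d N : ℕ) (Λ : Matrix (Fin dA × Fin d) (Fin dA × Fin d) ℂ) : Prop :=
  ∃ Λext : Matrix (ExtIdx dA d N) (ExtIdx dA d N) ℂ,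
    Λext.PosSemidef ∧ ptraceExt Λext = Λ ∧
    Λext * ((1 : Matrix (Fin dA) (Fin dA) ℂ) ⊗ₖ symProjB d N) = Λext ∧
    (pt Λext).PosSemidef

/-- Membership in `𝒮̃^N = {(N/(N+d)) σ + (1/(N+d)) σ_A ⊗ 𝕀_B : σ ∈ 𝒮^N}`. -/
def MemStildeN (dA d N : ℕ) (Λ : Matrix (Fin dA × Fin d) (Fin dA × Fin d) ℂ) : Prop :=
  ∃ σ, MemSN dA d N σ ∧
    Λ = ((N : ℂ) / ((N : ℂ) + d)) • σ +
        (1 / ((N : ℂ) + d)) • (trB σ ⊗ₖ (1 : Matrix (Fin d) (Fin d) ℂ))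

/-- The Jacobi polynomial `P_n^{(α,β)}` (for natural parameters `α, β`). -/
def jacobiP (n α β : ℕ) (x : ℝ) : ℝ :=
  ∑ s ∈ Finset.range (n + 1),
    (Nat.choose (n + α) (n - s) : ℝ) * (Nat.choose (n + β) s : ℝ) *
      ((x - 1) / 2) ^ s * ((x + 1) / 2) ^ (n - s)

/-- `ε_N = (d/(2(d-1))) · min {1 - x : P_{⌊N/2⌋+1}^{(d-2, N mod 2)}(x) = 0}`. -/
def epsN (d N : ℕ) : ℝ :=
  ((d : ℝ) / (2 * ((d : ℝ) - 1))) *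
    sInf {y : ℝ | ∃ x : ℝ, y = 1 - x ∧ jacobiP (N / 2 + 1) (d - 2) (N % 2) x = 0}

/-- Membership in `𝒮̃_p^N = {(1-ε_N) σ + ε_N σ_A ⊗ 𝕀_B/d : σ ∈ 𝒮_p^N}`. -/
def MemStildeNp (dA d N : ℕ) (Λ : Matrix (Fin dA × Fin d) (Fin dA × Fin d) ℂ) : Prop :=
  ∃ σ, MemSNp dA d N σ ∧
    Λ = ((1 : ℂ) - (epsN d N : ℂ)) • σ +
        ((epsN d N : ℂ) / d) • (trB σ ⊗ₖ (1 : Matrix (Fin d) (Fin d) ℂ))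

/-- The square root of a positive semidefinite matrix, as `Matrix.PosSemidef.sqrt` was
defined in the older Mathlib (removed since). -/
def _root_.Matrix.PosSemidef.sqrt {n : Type*} [Fintype n] [DecidableEq n] {A : Matrix n n ℂ}
    (hA : A.PosSemidef) : Matrix n n ℂ :=
  hA.1.eigenvectorUnitary.1 * diagonal ((↑) ∘ (√·) ∘ hA.1.eigenvalues) *
    (star hA.1.eigenvectorUnitary : Matrix n n ℂ)

/-- The trace norm `‖Z‖₁ = tr √(Z Zᴴ)`. -/
def traceNorm {n : Type*} [Fintype n] [DecidableEq n] (Z : Matrix n n ℂ) : ℝ :=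
  ((Matrix.posSemidef_self_mul_conjTranspose Z).sqrt.trace).re

/-- The operator norm `‖Z‖_∞` (largest singular value), as the norm of the induced
operator on Euclidean space. -/
def opNorm {n : Type*} [Fintype n] [DecidableEq n] (Z : Matrix n n ℂ) : ℝ :=
  ‖LinearMap.toContinuousLinearMap (Matrix.toEuclideanLin Z)‖

/-- `(|φ⟩⟨φ|)^{⊗N}` on `ℋ_B^{⊗N} = ℋ_B ⊗ ℋ_B^{⊗(N-1)}`. -/
def projPowExt {d : ℕ} (N : ℕ) (φ : Fin d → ℂ) :
    Matrix (Fin d × (Fin (N - 1) → Fin d)) (Fin d × (Fin (N - 1) → Fin d)) ℂ :=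
  fun p q => proj φ p.1 q.1 * ∏ i, proj φ (p.2 i) (q.2 i)

/-- The optimal fidelity `F = sup {tr(ρ Λ) : Λ ∈ 𝒮, tr_B Λ = 𝕀_A}`. -/
def fid (dA d : ℕ) (ρ : Matrix (Fin dA × Fin d) (Fin dA × Fin d) ℂ) : ℝ :=
  sSup {r : ℝ | ∃ Λ, IsSeparable dA d Λ ∧ trB Λ = 1 ∧ r = ((ρ * Λ).trace).re}

/-- `F̃^N = sup {tr(ρ Λ) : Λ ∈ 𝒮̃^N, tr_B Λ = 𝕀_A}`. -/
def fidTildeN (dA d N : ℕ) (ρ : Matrix (Fin dA × Fin d) (Fin dA × Fin d) ℂ) : ℝ :=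
  sSup {r : ℝ | ∃ Λ, MemStildeN dA d N Λ ∧ trB Λ = 1 ∧ r = ((ρ * Λ).trace).re}

/-- `F̃_p^N = sup {tr(ρ Λ) : Λ ∈ 𝒮̃_p^N, tr_B Λ = 𝕀_A}`. -/
def fidTildeNp (dA d N : ℕ) (ρ : Matrix (Fin dA × Fin d) (Fin dA × Fin d) ℂ) : ℝ :=
  sSup {r : ℝ | ∃ Λ, MemStildeNp dA d N Λ ∧ trB Λ = 1 ∧ r = ((ρ * Λ).trace).re}

/-- Robustness relative to a set `T` of operators:
`R_T(ρ) = inf {tr σ : σ ∈ T, ρ + σ ∈ T}` (with `inf ∅ = +∞`). -/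
def rob {dA d : ℕ} (T : Set (Matrix (Fin dA × Fin d) (Fin dA × Fin d) ℂ))
    (ρ : Matrix (Fin dA × Fin d) (Fin dA × Fin d) ℂ) : ℝ≥0∞ :=
  sInf {t : ℝ≥0∞ | ∃ σ ∈ T, ρ + σ ∈ T ∧ t = ENNReal.ofReal ((σ.trace).re)}


section JacobiAux
open Finset

private def cJ (n α β s : ℕ) : ℝ := ((n+α).choose (n-s)) * ((n+β).choose s)
private def uu (x : ℝ) : ℝ := (x-1)/2
private def vv (x : ℝ) : ℝ := (x+1)/2

private lemma jacobiP_eq (n α β : ℕ) (x : ℝ) :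
    jacobiP n α β x = ∑ s ∈ range (n+1), cJ n α β s * (uu x ^ s * vv x ^ (n-s)) := by
  unfold jacobiP cJ uu vv
  exact Finset.sum_congr rfl fun s _ => by ring

private lemma hasDerivAt_uu (x : ℝ) : HasDerivAt uu (1/2) x := by
  have := ((hasDerivAt_id x).sub_const 1).div_const 2
  exact this

private lemma hasDerivAt_vv (x : ℝ) : HasDerivAt vv (1/2) x := by
  have := ((hasDerivAt_id x).add_const 1).div_const 2
  exact this

/-- formal termwise derivative of jacobiP -/
private def qQ (n α β : ℕ) (x : ℝ) : ℝ :=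
  ∑ s ∈ range (n+1), cJ n α β s *
    ((s:ℝ) * uu x ^ (s-1) * vv x ^ (n-s) + ((n-s:ℕ):ℝ) * uu x ^ s * vv x ^ (n-s-1)) / 2

private lemma hasDerivAt_jacobiP (n α β : ℕ) (x : ℝ) :
    HasDerivAt (jacobiP n α β) (qQ n α β x) x := by
  have hfun : jacobiP n α β = fun y => ∑ s ∈ range (n+1), cJ n α β s * (uu y ^ s * vv y ^ (n-s)) :=
    funext fun y => jacobiP_eq n α β y
  rw [hfun, qQ]
  apply HasDerivAt.fun_sum
  intro s _
  have h1 : HasDerivAt (fun y => uu y ^ s) ((s:ℝ) * uu x ^ (s-1) * (1/2)) x :=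
    (hasDerivAt_uu x).fun_pow s
  have h2 : HasDerivAt (fun y => vv y ^ (n-s)) (((n-s:ℕ):ℝ) * vv x ^ (n-s-1) * (1/2)) x :=
    (hasDerivAt_vv x).fun_pow (n-s)
  have := (h1.fun_mul h2).const_mul (cJ n α β s)
  refine this.congr_deriv ?_
  ring

/-- the rescaled product `(1-x)^(α+1)(1+x)^(β+1) * qQ`, in monomial form -/
private def kk (α β : ℕ) : ℝ := (-1)^(α+1) * 2^(α+β+2)

private def fF (n α β : ℕ) (x : ℝ) : ℝ :=
  ∑ s ∈ range (n+1), kk α β * cJ n α β s *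
    ((s:ℝ) * uu x ^ (s+α) * vv x ^ (n-s+β+1) + ((n-s:ℕ):ℝ) * uu x ^ (s+α+1) * vv x ^ (n-s+β)) / 2

private lemma pm (y : ℝ) (s m : ℕ) : (s:ℝ) * y^(s-1) * y^(m+1) = (s:ℝ) * y^(s+m) := by
  cases s with
  | zero => simp
  | succ k =>
    have h : k + (m+1) = k + 1 + m := by omega
    rw [Nat.succ_sub_one, mul_assoc, ← pow_add, h]

private lemma fF_eq (n α β : ℕ) (x : ℝ) :
    (1-x)^(α+1) * (1+x)^(β+1) * qQ n α β x = fF n α β x := by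
  rw [qQ, fF, Finset.mul_sum]
  refine Finset.sum_congr rfl fun s _ => ?_
  have hu : (1-x) = (-2) * uu x := by unfold uu; ring
  have hv : (1+x) = 2 * vv x := by unfold vv; ring
  rw [hu, hv, mul_pow, mul_pow]
  have e1 : (s:ℝ) * uu x ^ (s-1) * uu x ^ (α+1) = (s:ℝ) * uu x ^ (s+α) := pm _ s α
  have e2 : ((n-s:ℕ):ℝ) * vv x ^ (n-s-1) * vv x ^ (β+1) = ((n-s:ℕ):ℝ) * vv x ^ (n-s+β) :=
    pm _ (n-s) β
  have e3 : uu x ^ s * uu x ^ (α+1) = uu x ^ (s+α+1) := by rw [← pow_add]; rfl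
  have e4 : vv x ^ (n-s) * vv x ^ (β+1) = vv x ^ (n-s+β+1) := by rw [← pow_add]; rfl
  have hk : ((-2:ℝ))^(α+1) * 2^(β+1) = kk α β := by
    rw [kk, neg_pow]
    have : (2:ℝ)^(α+1) * 2^(β+1) = 2^(α+β+2) := by rw [← pow_add]; congr 1; omega
    rw [mul_assoc, this]
  calc ((-2:ℝ))^(α+1) * uu x ^(α+1) * (2^(β+1) * vv x ^(β+1)) *
        (cJ n α β s * ((s:ℝ) * uu x ^ (s-1) * vv x ^ (n-s) + ((n-s:ℕ):ℝ) * uu x ^ s * vv x ^ (n-s-1)) / 2)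
      = ((-2:ℝ))^(α+1) * 2^(β+1) * (cJ n α β s *
          (((s:ℝ) * uu x ^ (s-1) * uu x ^(α+1)) * (vv x ^ (n-s) * vv x ^(β+1))
           + (((n-s:ℕ):ℝ) * (uu x ^ s * uu x ^(α+1)) * (vv x ^ (n-s-1) * vv x ^(β+1)))) / 2) := by ring
    _ = kk α β * cJ n α β s *
        ((s:ℝ) * uu x ^ (s+α) * vv x ^ (n-s+β+1) + ((n-s:ℕ):ℝ) * uu x ^ (s+α+1) * vv x ^ (n-s+β)) / 2 := by
        rw [e3, e4]
        rw [mul_comm (vv x ^ (n-s-1)) (vv x ^(β+1))]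
        rw [show ((n-s:ℕ):ℝ) * uu x ^ (s+α+1) * (vv x ^(β+1) * vv x ^ (n-s-1))
              = uu x ^ (s+α+1) * (((n-s:ℕ):ℝ) * vv x ^ ((n-s)-1) * vv x ^(β+1)) from by ring, e2]
        rw [show (s:ℝ) * uu x ^ (s-1) * uu x ^(α+1) * vv x ^ (n-s+β+1)
              = ((s:ℝ) * uu x ^ (s-1) * uu x ^(α+1)) * vv x ^ (n-s+β+1) from by ring, e1]
        rw [← hk]
        ring

/-- termwise derivative of fF -/
private def dD (n α β : ℕ) (x : ℝ) : ℝ :=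
  ∑ s ∈ range (n+1), kk α β * cJ n α β s *
    ((s:ℝ) * ((s+α:ℕ):ℝ) * uu x ^ (s+α-1) * vv x ^ (n-s+β+1)
     + ((s:ℝ) * ((n-s+β+1:ℕ):ℝ) + ((n-s:ℕ):ℝ) * ((s+α+1:ℕ):ℝ)) * (uu x ^ (s+α) * vv x ^ (n-s+β))
     + ((n-s:ℕ):ℝ) * ((n-s+β:ℕ):ℝ) * uu x ^ (s+α+1) * vv x ^ (n-s+β-1)) / 4

private lemma hasDerivAt_fF (n α β : ℕ) (x : ℝ) :
    HasDerivAt (fF n α β) (dD n α β x) x := by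
  rw [show fF n α β = fun y => ∑ s ∈ range (n+1), kk α β * cJ n α β s *
    ((s:ℝ) * uu y ^ (s+α) * vv y ^ (n-s+β+1) + ((n-s:ℕ):ℝ) * uu y ^ (s+α+1) * vv y ^ (n-s+β)) / 2
    from rfl, dD]
  apply HasDerivAt.fun_sum
  intro s _
  have hA := (((hasDerivAt_uu x).fun_pow (s+α)).const_mul (s:ℝ)).fun_mul ((hasDerivAt_vv x).fun_pow (n-s+β+1))
  have hB := (((hasDerivAt_uu x).fun_pow (s+α+1)).const_mul ((n-s:ℕ):ℝ)).fun_mul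
      ((hasDerivAt_vv x).fun_pow (n-s+β))
  have := ((hA.fun_add hB).const_mul (kk α β * cJ n α β s)).div_const 2
  refine this.congr_deriv ?_
  simp only [Nat.add_sub_cancel]
  ring

private lemma I1 (n α β j : ℕ) (hj : j < n) :
    cJ n α β (j+1) * ((j+1:ℕ):ℝ) * ((j+1+α:ℕ):ℝ)
      = cJ n α β j * (((n-j:ℕ):ℝ) * ((n-j+β:ℕ):ℝ)) := by
  obtain ⟨k, rfl⟩ : ∃ k, n = j + k + 1 := ⟨n - j - 1, by omega⟩
  unfold cJ
  rw [show j + k + 1 - (j+1) = k from by omega, show j + k + 1 - j = k + 1 from by omega]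
  have h1 : ((j+k+1+β).choose (j+1) * (j+1) : ℕ) = (j+k+1+β).choose j * (k+1+β) := by
    have := Nat.choose_succ_right_eq (j+k+1+β) j
    rwa [show j+k+1+β - j = k+1+β from by omega] at this
  have h2 : ((j+k+1+α).choose (k+1) * (k+1) : ℕ) = (j+k+1+α).choose k * (j+1+α) := by
    have := Nat.choose_succ_right_eq (j+k+1+α) k
    rwa [show j+k+1+α - k = j+1+α from by omega] at this
  have h1' : (((j+k+1+β).choose (j+1) : ℕ) : ℝ) * ((j+1 : ℕ) : ℝ)
      = (((j+k+1+β).choose j : ℕ) : ℝ) * ((k+1+β : ℕ) : ℝ) := by exact_mod_cast h1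
  have h2' : (((j+k+1+α).choose (k+1) : ℕ) : ℝ) * ((k+1 : ℕ) : ℝ)
      = (((j+k+1+α).choose k : ℕ) : ℝ) * ((j+1+α : ℕ) : ℝ) := by exact_mod_cast h2
  linear_combination ((((j+k+1+α).choose k : ℕ) : ℝ) * ((j+1+α:ℕ):ℝ)) * h1'
    - ((((j+k+1+β).choose j : ℕ) : ℝ) * ((k+1+β:ℕ):ℝ)) * h2'

private lemma dD_eq (n α β : ℕ) (x : ℝ) :
    dD n α β x = -(((n*(n+α+β+1) : ℕ)):ℝ) * ((1-x)^α * (1+x)^β * jacobiP n α β x) := by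
  have hsplit : dD n α β x
      = (∑ s ∈ range (n+1), kk α β * cJ n α β s *
          ((s:ℝ) * ((s+α:ℕ):ℝ) * uu x ^ (s+α-1) * vv x ^ (n-s+β+1)) / 4)
      + (∑ s ∈ range (n+1), kk α β * cJ n α β s *
          (((s:ℝ) * ((n-s+β+1:ℕ):ℝ) + ((n-s:ℕ):ℝ) * ((s+α+1:ℕ):ℝ)) *
            (uu x ^ (s+α) * vv x ^ (n-s+β))) / 4)
      + (∑ s ∈ range (n+1), kk α β * cJ n α β s *
          (((n-s:ℕ):ℝ) * ((n-s+β:ℕ):ℝ) * uu x ^ (s+α+1) * vv x ^ (n-s+β-1)) / 4) := by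
    rw [dD, ← Finset.sum_add_distrib, ← Finset.sum_add_distrib]
    exact Finset.sum_congr rfl fun s _ => by ring
  -- first sum reindexed
  have hS1 : (∑ s ∈ range (n+1), kk α β * cJ n α β s *
          ((s:ℝ) * ((s+α:ℕ):ℝ) * uu x ^ (s+α-1) * vv x ^ (n-s+β+1)) / 4)
      = ∑ j ∈ range (n+1), kk α β * cJ n α β j *
          ((((n-j:ℕ):ℝ) * ((n-j+β:ℕ):ℝ)) * (uu x ^ (j+α) * vv x ^ (n-j+β))) / 4 := by
    rw [Finset.sum_range_succ' (fun s => kk α β * cJ n α β s *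
          ((s:ℝ) * ((s+α:ℕ):ℝ) * uu x ^ (s+α-1) * vv x ^ (n-s+β+1)) / 4) n]
    rw [Finset.sum_range_succ (fun j => kk α β * cJ n α β j *
          ((((n-j:ℕ):ℝ) * ((n-j+β:ℕ):ℝ)) * (uu x ^ (j+α) * vv x ^ (n-j+β))) / 4) n]
    simp only [Nat.cast_zero, zero_mul, mul_zero, zero_div, add_zero, Nat.sub_self]
    refine Finset.sum_congr rfl fun j hj => ?_
    have hjn : j < n := Finset.mem_range.1 hj
    rw [show j+1+α-1 = j+α from by omega, show n-(j+1)+β+1 = n-j+β from by omega]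
    have := I1 n α β j hjn
    calc kk α β * cJ n α β (j+1) *
          (((j+1:ℕ):ℝ) * ((j+1+α:ℕ):ℝ) * uu x ^ (j+α) * vv x ^ (n-j+β)) / 4
        = kk α β * (cJ n α β (j+1) * ((j+1:ℕ):ℝ) * ((j+1+α:ℕ):ℝ)) *
            (uu x ^ (j+α) * vv x ^ (n-j+β)) / 4 := by push_cast; ring
      _ = kk α β * (cJ n α β j * (((n-j:ℕ):ℝ) * ((n-j+β:ℕ):ℝ))) *
            (uu x ^ (j+α) * vv x ^ (n-j+β)) / 4 := by rw [this]
      _ = kk α β * cJ n α β j *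
          ((((n-j:ℕ):ℝ) * ((n-j+β:ℕ):ℝ)) * (uu x ^ (j+α) * vv x ^ (n-j+β))) / 4 := by ring
  -- third sum reindexed
  have hS3 : (∑ s ∈ range (n+1), kk α β * cJ n α β s *
          (((n-s:ℕ):ℝ) * ((n-s+β:ℕ):ℝ) * uu x ^ (s+α+1) * vv x ^ (n-s+β-1)) / 4)
      = ∑ j ∈ range (n+1), kk α β * cJ n α β j *
          (((j:ℝ) * ((j+α:ℕ):ℝ)) * (uu x ^ (j+α) * vv x ^ (n-j+β))) / 4 := by
    rw [Finset.sum_range_succ (fun s => kk α β * cJ n α β s *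
          (((n-s:ℕ):ℝ) * ((n-s+β:ℕ):ℝ) * uu x ^ (s+α+1) * vv x ^ (n-s+β-1)) / 4) n]
    rw [Finset.sum_range_succ' (fun j => kk α β * cJ n α β j *
          (((j:ℝ) * ((j+α:ℕ):ℝ)) * (uu x ^ (j+α) * vv x ^ (n-j+β))) / 4) n]
    simp only [Nat.sub_self, Nat.cast_zero, zero_mul, mul_zero, zero_div, add_zero]
    refine Finset.sum_congr rfl fun s hs => ?_
    have hsn : s < n := Finset.mem_range.1 hs
    rw [show s+α+1 = s+1+α from by omega, show n-s+β-1 = n-(s+1)+β from by omega]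
    have := I1 n α β s hsn
    calc kk α β * cJ n α β s *
          (((n-s:ℕ):ℝ) * ((n-s+β:ℕ):ℝ) * uu x ^ (s+1+α) * vv x ^ (n-(s+1)+β)) / 4
        = kk α β * (cJ n α β s * (((n-s:ℕ):ℝ) * ((n-s+β:ℕ):ℝ))) *
            (uu x ^ (s+1+α) * vv x ^ (n-(s+1)+β)) / 4 := by ring
      _ = kk α β * (cJ n α β (s+1) * ((s+1:ℕ):ℝ) * ((s+1+α:ℕ):ℝ)) *
            (uu x ^ (s+1+α) * vv x ^ (n-(s+1)+β)) / 4 := by rw [this]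
      _ = kk α β * cJ n α β (s+1) *
          ((((s+1:ℕ)):ℝ) * ((s+1+α:ℕ):ℝ) * (uu x ^ (s+1+α) * vv x ^ (n-(s+1)+β))) / 4 := by
            push_cast; ring
  rw [hsplit, hS1, hS3, ← Finset.sum_add_distrib, ← Finset.sum_add_distrib]
  rw [jacobiP_eq]
  have hu : (1-x)^α = (-2:ℝ)^α * uu x ^ α := by rw [← mul_pow]; congr 1; unfold uu; ring
  have hv : (1+x)^β = (2:ℝ)^β * vv x ^ β := by rw [← mul_pow]; congr 1; unfold vv; ring
  rw [hu, hv]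
  rw [Finset.mul_sum, Finset.mul_sum]
  refine Finset.sum_congr rfl fun j hj => ?_
  have hjn : j ≤ n := by have := Finset.mem_range.1 hj; omega
  obtain ⟨k, hk⟩ : ∃ k, n = j + k := ⟨n - j, by omega⟩
  have hcoef : (((n-j:ℕ):ℝ) * ((n-j+β:ℕ):ℝ))
      + ((j:ℝ) * ((n-j+β+1:ℕ):ℝ) + ((n-j:ℕ):ℝ) * ((j+α+1:ℕ):ℝ))
      + ((j:ℝ) * ((j+α:ℕ):ℝ)) = ((n*(n+α+β+1) : ℕ):ℝ) := by
    subst hk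
    rw [show j+k-j = k from by omega]
    push_cast
    ring
  have hkk4 : kk α β / 4 = -((-2:ℝ)^α * 2^β) := by
    rw [kk, show ((-2:ℝ))^α = (-1)^α * 2^α from by rw [neg_pow],
      show α+β+2 = α+(β+2) from by omega, pow_add, pow_add, pow_succ]
    norm_num
    ring
  have hmerge : uu x ^ α * uu x ^ j = uu x ^ (j+α) := by rw [← pow_add]; congr 1; omega
  have hmerge2 : vv x ^ β * vv x ^ (n-j) = vv x ^ (n-j+β) := by rw [← pow_add]; congr 1; omega
  calc kk α β * cJ n α β j *
        ((((n-j:ℕ):ℝ) * ((n-j+β:ℕ):ℝ)) * (uu x ^ (j+α) * vv x ^ (n-j+β))) / 4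
      + kk α β * cJ n α β j *
        (((j:ℝ) * ((n-j+β+1:ℕ):ℝ) + ((n-j:ℕ):ℝ) * ((j+α+1:ℕ):ℝ)) *
          (uu x ^ (j+α) * vv x ^ (n-j+β))) / 4
      + kk α β * cJ n α β j *
        (((j:ℝ) * ((j+α:ℕ):ℝ)) * (uu x ^ (j+α) * vv x ^ (n-j+β))) / 4
      = (kk α β / 4) * cJ n α β j *
        (((((n-j:ℕ):ℝ) * ((n-j+β:ℕ):ℝ))
          + ((j:ℝ) * ((n-j+β+1:ℕ):ℝ) + ((n-j:ℕ):ℝ) * ((j+α+1:ℕ):ℝ))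
          + ((j:ℝ) * ((j+α:ℕ):ℝ))) * (uu x ^ (j+α) * vv x ^ (n-j+β))) := by ring
    _ = (-((-2:ℝ)^α * 2^β)) * cJ n α β j *
          (((n*(n+α+β+1) : ℕ):ℝ) * (uu x ^ (j+α) * vv x ^ (n-j+β))) := by rw [hcoef, hkk4]
    _ = -((n*(n+α+β+1) : ℕ):ℝ) *
          ((-2:ℝ)^α * uu x ^ α * ((2:ℝ)^β * vv x ^ β) *
            (cJ n α β j * (uu x ^ j * vv x ^ (n-j)))) := by
        rw [show (-2:ℝ)^α * uu x ^ α * ((2:ℝ)^β * vv x ^ β) *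
              (cJ n α β j * (uu x ^ j * vv x ^ (n-j)))
            = (-2:ℝ)^α * (2:ℝ)^β * cJ n α β j *
              ((uu x ^ α * uu x ^ j) * (vv x ^ β * vv x ^ (n-j))) from by ring,
          hmerge, hmerge2]
        ring

private lemma continuous_jacobiP (n α β : ℕ) : Continuous (jacobiP n α β) := by
  unfold jacobiP
  exact continuous_finset_sum _ fun s _ => by fun_prop

private lemma jacobiP_pos (n α β : ℕ) {x : ℝ} (hx : 1 ≤ x) : 0 < jacobiP n α β x := by
  rw [jacobiP_eq]
  have h0 : (0:ℕ) ∈ range (n+1) := by simp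
  refine Finset.sum_pos' (fun s hs => ?_) ⟨0, h0, ?_⟩
  · have h1 : (0:ℝ) ≤ uu x := by unfold uu; linarith
    have h2 : (0:ℝ) ≤ vv x := by unfold vv; linarith
    have : (0:ℝ) ≤ cJ n α β s := by unfold cJ; positivity
    positivity
  · have h1 : (0:ℝ) < vv x := by unfold vv; linarith
    have hc : 0 < (n+α).choose (n-0) := Nat.choose_pos (by omega)
    have : (0:ℝ) < cJ n α β 0 := by
      unfold cJ
      have h1 : (1:ℝ) ≤ ((n+α).choose (n-0) : ℝ) := by exact_mod_cast hc
      have h2 : (1:ℝ) ≤ ((n+β).choose 0 : ℝ) := by simp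
      nlinarith
    simp only [pow_zero, mul_one]
    positivity

private lemma hasDerivAt_W (α β : ℕ) (x : ℝ) :
    HasDerivAt (fun y => (1-y)^(α+1) * (1+y)^(β+1))
      ((1-x)^α * (1+x)^β * (((β:ℝ)-(α:ℝ)) - ((α:ℝ)+(β:ℝ)+2)*x)) x := by
  have h1 : HasDerivAt (fun y : ℝ => (1-y)^(α+1))
      (((α+1:ℕ):ℝ) * (1-x)^α * (-1)) x := by
    have := ((hasDerivAt_id x).const_sub 1).fun_pow (α+1)
    simpa using this
  have h2 : HasDerivAt (fun y : ℝ => (1+y)^(β+1))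
      (((β+1:ℕ):ℝ) * (1+x)^β * 1) x := by
    have := ((hasDerivAt_id x).const_add 1).fun_pow (β+1)
    simpa using this
  have := h1.fun_mul h2
  refine this.congr_deriv ?_
  rw [pow_succ (1-x) α, pow_succ (1+x) β]
  push_cast
  ring

/-- The Sturm-type comparison: if the certificate polynomial is positive on `(t,1)`,
then `jacobiP` has a root there. -/
private lemma sturm (n α β : ℕ) (t : ℝ) (ht1 : -1 ≤ t) (ht2 : t < 1)
    (hg : ∀ x ∈ Set.Ioo t (1:ℝ),
        0 < ((n*(n+α+β+1) : ℕ):ℝ) * ((x-t)^2*(1-x))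
          + (((β:ℝ)-(α:ℝ)) - ((α:ℝ)+(β:ℝ)+2)*x) * ((x-t)*(2+t-3*x))
          + (1-x^2)*(2+4*t-6*x)) :
    ∃ x ∈ Set.Ioo t (1:ℝ), jacobiP n α β x = 0 := by
  by_contra hcon
  push_neg at hcon
  -- positivity of P on (t,1)
  have hPpos : ∀ x ∈ Set.Ioo t (1:ℝ), 0 < jacobiP n α β x := by
    intro x hx
    rcases lt_trichotomy (jacobiP n α β x) 0 with hneg | h0 | hposx
    · exfalso
      have hIVT := intermediate_value_Ioo (le_of_lt hx.2)
        (Continuous.continuousOn (continuous_jacobiP n α β))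
      have h0mem : (0:ℝ) ∈ Set.Ioo (jacobiP n α β x) (jacobiP n α β 1) :=
        ⟨hneg, jacobiP_pos n α β le_rfl⟩
      obtain ⟨c, hc, hc0⟩ := hIVT h0mem
      exact hcon c ⟨lt_trans hx.1 hc.1, hc.2⟩ hc0
    · exact absurd h0 (hcon x hx)
    · exact hposx
  -- the integrand
  set G : ℝ → ℝ := fun x =>
    ((n*(n+α+β+1) : ℕ):ℝ) * ((x-t)^2*(1-x))
      + (((β:ℝ)-(α:ℝ)) - ((α:ℝ)+(β:ℝ)+2)*x) * ((x-t)*(2+t-3*x))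
      + (1-x^2)*(2+4*t-6*x) with hGdef
  set f : ℝ → ℝ := fun x => (1-x)^α * (1+x)^β * jacobiP n α β x * G x with hfdef
  have hfcont : Continuous f := by
    have hj := continuous_jacobiP n α β
    rw [hfdef, hGdef]
    fun_prop
  -- the antiderivative
  set H : ℝ → ℝ := fun x => fF n α β x * ((x-t)^2*(1-x))
      - ((1-x)^(α+1) * (1+x)^(β+1)) * jacobiP n α β x * ((x-t)*(2+t-3*x)) with hHdef
  have hH : ∀ x : ℝ, HasDerivAt H (-(f x)) x := by
    intro x
    have hφ : HasDerivAt (fun y => (y-t)^2*(1-y)) ((x-t)*(2+t-3*x)) x := by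
      have h1 : HasDerivAt (fun y : ℝ => (y-t)^2) (((2:ℕ):ℝ) * (x-t)^1 * 1) x :=
        ((hasDerivAt_id x).sub_const t).fun_pow 2
      have h2 : HasDerivAt (fun y : ℝ => 1-y) (-1) x := by
        simpa using ((hasDerivAt_id x).const_sub 1)
      have := h1.fun_mul h2
      refine this.congr_deriv ?_
      push_cast
      ring
    have hdφ : HasDerivAt (fun y => (y-t)*(2+t-3*y)) (2+4*t-6*x) x := by
      have h1 : HasDerivAt (fun y : ℝ => y-t) 1 x := (hasDerivAt_id x).sub_const t
      have h2 : HasDerivAt (fun y : ℝ => 2+t-3*y) (-3) x := by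
        have := (hasDerivAt_const x (2+t)).fun_sub ((hasDerivAt_id x).const_mul 3)
        simpa using this
      have := h1.fun_mul h2
      refine this.congr_deriv ?_
      ring
    have hFd := hasDerivAt_fF n α β x
    have hP := hasDerivAt_jacobiP n α β x
    have hWx := hasDerivAt_W α β x
    have hcomb := (hFd.fun_mul hφ).fun_sub (((hWx.fun_mul hP).fun_mul hdφ))
    refine hcomb.congr_deriv ?_
    rw [dD_eq n α β x, ← fF_eq n α β x, hfdef, hGdef]
    simp only
    rw [pow_succ (1-x) α, pow_succ (1+x) β]
    ring
  have hInt : IntervalIntegrable (fun x => -(f x)) MeasureTheory.volume t 1 :=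
    (hfcont.neg).intervalIntegrable t 1
  have hFTC := intervalIntegral.integral_eq_sub_of_hasDerivAt
    (f := H) (f' := fun x => -(f x)) (fun x _ => hH x) hInt
  have hH1 : H 1 = 0 := by
    rw [hHdef]
    simp [zero_pow (Nat.succ_ne_zero α)]
  have hHt : H t = 0 := by
    rw [hHdef]
    simp
  rw [hH1, hHt, sub_zero] at hFTC
  have hpos : 0 < ∫ x in t..(1:ℝ), f x := by
    apply intervalIntegral.intervalIntegral_pos_of_pos_on
      (hfcont.intervalIntegrable t 1) _ ht2
    intro x hx
    have h1 : (0:ℝ) < 1 - x := by linarith [hx.2]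
    have h2 : (0:ℝ) < 1 + x := by linarith [hx.1]
    have h3 := hPpos x hx
    have h4 : 0 < G x := hg x hx
    show 0 < (1 - x) ^ α * (1 + x) ^ β * jacobiP n α β x * G x
    positivity
  rw [intervalIntegral.integral_neg] at hFTC
  linarith
set_option maxHeartbeats 1000000 in
private lemma keyp (p q : ℝ) (hp : 0 < p) (hq : 0 < q) (h1 : 1 ≤ p+q) (h2 : p+q < 2)
    (hc1 : p < 2*q) (hc2 : q < 2*p) :
    (2-p-q)*(2-q)*(4*p-2*q) < (14-6*p-6*q)*p^2 := by
  nlinarith [mul_pos hp hq, sq_nonneg (p-q), sq_nonneg (2*q-p), sq_nonneg (2*p-q),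
    sq_nonneg (p+q-1), mul_pos (show (0:ℝ) < 2*q-p by linarith) (show (0:ℝ) < 2*p-q by linarith),
    mul_nonneg (sq_nonneg (p+q-1)) hp.le, mul_nonneg (sq_nonneg (p+q-1)) hq.le,
    mul_nonneg (mul_nonneg hp.le hq.le) (show (0:ℝ) ≤ 2-p-q by linarith),
    mul_pos hp hp, mul_pos hq hq]

set_option maxHeartbeats 1000000 in
private lemma certA_core (a b L p q : ℝ) (ha : 0 ≤ a) (hb0 : 0 ≤ b) (hb1 : b ≤ 1)
    (hp : 0 < p) (hq : 0 < q) (hsum : (a+2)*(p+q) = 2*a+2) (hL : 3*(a+b+4) ≤ L) :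
    0 < L*(p^2*q) + (b*q-(a+2)*p)*(p*(2*q-p)) + q*(2-q)*(2*q-4*p) := by
  have hh1 : 1 ≤ p + q := by nlinarith
  have hpos2h : 0 < 2-(p+q) := by nlinarith
  have hq2 : q < 2 := by nlinarith
  have hL12 : 12 ≤ L := by nlinarith
  rcases le_or_gt (2*q) p with hc1 | hc1
  · -- case 1 : p ≥ 2q
    have hp23 : 2/3 ≤ p := by linarith
    have hLp : 8 ≤ L * p := by nlinarith [mul_le_mul hL12 hp23 (by norm_num) (by linarith : (0:ℝ) ≤ L)]
    have hAneg : b*q - (a+2)*p ≤ 0 := by nlinarith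
    have hterm : 0 ≤ (b*q-(a+2)*p)*(p*(2*q-p)) := by
      have h2 : p*(2*q-p) ≤ 0 := by nlinarith
      nlinarith [mul_nonneg (neg_nonneg.2 hAneg) (neg_nonneg.2 h2)]
    nlinarith [hterm, mul_nonneg (mul_nonneg (by linarith : (0:ℝ) ≤ L*p - 8) hp.le) hq.le,
      mul_pos (mul_pos hq hq) (show (0:ℝ) < 2+2*p-q by nlinarith)]
  · rcases le_or_gt (2*p) q with hc3 | hc2
    · -- case 3 : p ≤ q/2
      have hterm3 : 0 ≤ q*(2-q)*(2*q-4*p) :=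
        mul_nonneg (mul_nonneg hq.le (by linarith)) (by linarith)
      have hAterm : -(2*(a+2)*(p^2*q)) ≤ (b*q-(a+2)*p)*(p*(2*q-p)) := by
        nlinarith [mul_le_mul_of_nonneg_right
          (show -((a+2)*p) ≤ b*q-(a+2)*p by nlinarith)
          (show (0:ℝ) ≤ p*(2*q-p) by nlinarith),
          mul_le_mul_of_nonneg_left (show p*(2*q-p) ≤ p*(2*q) by nlinarith)
            (show (0:ℝ) ≤ (a+2)*p by positivity)]
      have hlast : 0 < (L - 2*(a+2))*(p^2*q) :=
        mul_pos (by nlinarith) (by positivity)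
      nlinarith [hterm3, hAterm, hlast]
    · -- case 2 : q/2 < p < 2q
      have hfirst : 0 ≤ p*(b*q*(2*q-p) + (a+2)*p^2) := by
        apply mul_nonneg hp.le
        have h5 : 0 ≤ b*q*(2*q-p) := mul_nonneg (mul_nonneg hb0 hq.le) (by linarith)
        nlinarith [sq_nonneg p]
      have hkey' := keyp p q hp hq hh1 (by linarith) hc1 hc2
      have key : (2-q)*(4*p-2*q) < (a+8)*p^2 := by
        rw [show (14-6*p-6*q) = (a+8)*(2-(p+q)) from by linear_combination hsum] at hkey'
        have h' : (2-(p+q)) * ((2-q)*(4*p-2*q)) < (2-(p+q)) * ((a+8)*p^2) := by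
          linear_combination hkey'
        exact lt_of_mul_lt_mul_left h' hpos2h.le
      have hab : a + 8 ≤ L - 2*(a+2) := by nlinarith
      have hZ : 0 < (L - 2*(a+2))*(p^2*q) - q*(2-q)*(4*p-2*q) := by
        have h6 : (a+8)*(p^2*q) ≤ (L - 2*(a+2))*(p^2*q) :=
          mul_le_mul_of_nonneg_right hab (by positivity)
        nlinarith [mul_lt_mul_of_pos_right key hq]
      nlinarith [hfirst, hZ]

set_option maxHeartbeats 1000000 in
private lemma certB_core (a b L p q : ℝ) (ha : 0 ≤ a) (hb0 : 0 ≤ b) (hb1 : b ≤ 1)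
    (hp : 0 < p) (hq : 0 < q) (hh : p + q ≤ 1/2) (hL0 : 0 ≤ L)
    (hLh : 30*(a+2)^2 ≤ L*(p+q)) :
    0 < L*(p^2*q) + ((a+b+2)*q-(2*a+2))*(p*(2*q-p)) + q*(2-q)*(2*q-4*p) := by
  have hq2 : q < 2 := by linarith
  have hA1 : (a+b+2)*q-(2*a+2) ≤ 0 := by nlinarith
  have hA2 : -(2*a+2) ≤ (a+b+2)*q-(2*a+2) := by nlinarith
  rcases le_or_gt (2*q) p with hc1 | hc1
  · -- case 1 : p ≥ 2q
    have hq3 : q ≤ (p+q)/3 := by linarith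
    have hLp : 8 ≤ L * p := by
      have h1 : L*q ≤ L*((p+q)/3) := mul_le_mul_of_nonneg_left hq3 hL0
      have h2 : (120:ℝ) ≤ L*(p+q) := by nlinarith
      nlinarith
    have hterm : 0 ≤ ((a+b+2)*q-(2*a+2))*(p*(2*q-p)) := by
      have h2 : p*(2*q-p) ≤ 0 := by nlinarith
      nlinarith [mul_nonneg (neg_nonneg.2 hA1) (neg_nonneg.2 h2)]
    nlinarith [hterm, mul_nonneg (mul_nonneg (by linarith : (0:ℝ) ≤ L*p - 8) hp.le) hq.le,
      mul_pos (mul_pos hq hq) (show (0:ℝ) < 2+2*p-q by nlinarith)]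
  · rcases le_or_gt ((4*a+15)*p) (3*(p+q)) with hc3 | hc2
    · -- case 3 : p tiny
      have hp5 : p ≤ (p+q)/5 := by nlinarith
      have h24 : 0 ≤ 2*q-4*p := by nlinarith
      have hthird : (3/2)*(q*(2*q-4*p)) ≤ q*(2-q)*(2*q-4*p) := by
        nlinarith [mul_nonneg hq.le h24]
      have hAterm : -((2*a+2)*(p*(2*q))) ≤ ((a+b+2)*q-(2*a+2))*(p*(2*q-p)) := by
        have h1 : 0 ≤ p*(2*q-p) := by nlinarith
        have h2 := mul_le_mul_of_nonneg_right hA2 h1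
        have h3 : p*(2*q-p) ≤ p*(2*q) := by nlinarith
        nlinarith [mul_le_mul_of_nonneg_left h3 (show (0:ℝ) ≤ 2*a+2 by linarith)]
      have hqlb : 3*(p+q) - (4*a+13)*p > 0 := by nlinarith [mul_pos hp (show (0:ℝ) < 4*a+15 by linarith)]
      -- R ≥ q*(3q - (4a+10) p) > 0
      nlinarith [mul_pos (mul_pos hp hp) hq, hthird, hAterm,
        mul_pos hq (show (0:ℝ) < 3*q - (4*a+10)*p by nlinarith)]
    · -- case 2
      have h1 : 0 ≤ p*(2*q-p) := by nlinarith
      have hAterm : -((2*a+2)*(2*(p*q))) ≤ ((a+b+2)*q-(2*a+2))*(p*(2*q-p)) := by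
        have h2 := mul_le_mul_of_nonneg_right hA2 h1
        have h3 : p*(2*q-p) ≤ 2*(p*q) := by nlinarith
        nlinarith [mul_le_mul_of_nonneg_left h3 (show (0:ℝ) ≤ 2*a+2 by linarith)]
      have hthird : -(8*(p*q)) ≤ q*(2-q)*(2*q-4*p) := by
        rcases le_or_gt 0 (2*q-4*p) with hs | hs
        · nlinarith [mul_nonneg (mul_nonneg hq.le (by linarith : (0:ℝ) ≤ 2-q)) hs]
        · nlinarith [mul_pos hp hq, mul_pos hq hq]
      have hLp : 4*a+12 < L*p := by
        have h2 : L*(3*(p+q)) ≤ L*((4*a+15)*p) := mul_le_mul_of_nonneg_left hc2.le hL0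
        nlinarith [sq_nonneg a, mul_nonneg ha ha, mul_nonneg (mul_nonneg ha ha) ha]
      nlinarith [hAterm, hthird, mul_pos (mul_pos hp hq) (show (0:ℝ) < L*p - (4*a+12) by linarith)]

private lemma rootA (n α β : ℕ) (hn : 3 ≤ n) (hβ : β ≤ 1) :
    ∃ x ∈ Set.Ioo (-(α:ℝ)/((α:ℝ)+2)) (1:ℝ), jacobiP n α β x = 0 := by
  have ha : (0:ℝ) ≤ (α:ℝ) := Nat.cast_nonneg α
  have ha2 : (0:ℝ) < (α:ℝ) + 2 := by linarith
  have ht : ((α:ℝ)+2) * (-(α:ℝ)/((α:ℝ)+2)) = -(α:ℝ) := by field_simp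
  have ht1 : (-1:ℝ) ≤ -(α:ℝ)/((α:ℝ)+2) := by nlinarith [ht]
  have ht2 : -(α:ℝ)/((α:ℝ)+2) < 1 := by nlinarith [ht]
  apply sturm n α β _ ht1 ht2
  intro x hx
  have hp : 0 < x - (-(α:ℝ)/((α:ℝ)+2)) := sub_pos.2 hx.1
  have hq : 0 < 1 - x := by linarith [hx.2]
  have hb0 : (0:ℝ) ≤ (β:ℝ) := Nat.cast_nonneg β
  have hb1 : ((β:ℝ)) ≤ 1 := by exact_mod_cast hβ
  have hsum : ((α:ℝ)+2)*((x - (-(α:ℝ)/((α:ℝ)+2))) + (1-x)) = 2*(α:ℝ)+2 := by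
    field_simp
    ring
  have hL : 3*((α:ℝ)+(β:ℝ)+4) ≤ ((n*(n+α+β+1) : ℕ):ℝ) := by
    have hnat : 3*(α+β+4) ≤ n*(n+α+β+1) := Nat.mul_le_mul hn (by omega)
    calc 3*((α:ℝ)+(β:ℝ)+4) = ((3*(α+β+4) : ℕ):ℝ) := by push_cast; ring
      _ ≤ _ := by exact_mod_cast hnat
  have hcore := certA_core (α:ℝ) (β:ℝ) ((n*(n+α+β+1) : ℕ):ℝ) (x - (-(α:ℝ)/((α:ℝ)+2))) (1-x)
    ha hb0 hb1 hp hq hsum hL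
  have hEq : ((n*(n+α+β+1) : ℕ):ℝ) * ((x-(-(α:ℝ)/((α:ℝ)+2)))^2*(1-x))
      + (((β:ℝ)-(α:ℝ)) - ((α:ℝ)+(β:ℝ)+2)*x) *
          ((x-(-(α:ℝ)/((α:ℝ)+2)))*(2+(-(α:ℝ)/((α:ℝ)+2))-3*x))
      + (1-x^2)*(2+4*(-(α:ℝ)/((α:ℝ)+2))-6*x)
      = ((n*(n+α+β+1) : ℕ):ℝ)*((x-(-(α:ℝ)/((α:ℝ)+2)))^2*(1-x))
        + ((β:ℝ)*(1-x)-((α:ℝ)+2)*(x-(-(α:ℝ)/((α:ℝ)+2))))*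
            ((x-(-(α:ℝ)/((α:ℝ)+2)))*(2*(1-x)-(x-(-(α:ℝ)/((α:ℝ)+2)))))
        + (1-x)*(2-(1-x))*(2*(1-x)-4*(x-(-(α:ℝ)/((α:ℝ)+2)))) := by
    linear_combination (-((x-(-(α:ℝ)/((α:ℝ)+2)))*(2+(-(α:ℝ)/((α:ℝ)+2))-3*x))) * ht
  rw [hEq]
  exact hcore

private lemma rootB (n α β : ℕ) (hβ : β ≤ 1) (hn : 1 ≤ n)
    (hbig : 60*((α:ℝ)+2)^2 ≤ (n:ℝ)) :
    ∃ x ∈ Set.Ioo (1 - 30*((α:ℝ)+2)^2/(n:ℝ)) (1:ℝ), jacobiP n α β x = 0 := by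
  have hn0 : (0:ℝ) < (n:ℝ) := by exact_mod_cast hn
  have ha2 : (0:ℝ) < (α:ℝ) + 2 := by positivity
  have hh0 : 0 < 30*((α:ℝ)+2)^2/(n:ℝ) := by positivity
  have hhalf : 30*((α:ℝ)+2)^2/(n:ℝ) ≤ 1/2 := by
    rw [div_le_iff₀ hn0]
    nlinarith
  apply sturm n α β _ (by linarith) (by linarith)
  intro x hx
  have hp : 0 < x - (1 - 30*((α:ℝ)+2)^2/(n:ℝ)) := sub_pos.2 hx.1
  have hq : 0 < 1 - x := by linarith [hx.2]
  have hb0 : (0:ℝ) ≤ (β:ℝ) := Nat.cast_nonneg β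
  have hb1 : ((β:ℝ)) ≤ 1 := by exact_mod_cast hβ
  have hsumh : (x - (1 - 30*((α:ℝ)+2)^2/(n:ℝ))) + (1-x) = 30*((α:ℝ)+2)^2/(n:ℝ) := by ring
  have hL0 : (0:ℝ) ≤ ((n*(n+α+β+1) : ℕ):ℝ) := Nat.cast_nonneg _
  have hLh : 30*((α:ℝ)+2)^2 ≤ ((n*(n+α+β+1) : ℕ):ℝ) *
      ((x - (1 - 30*((α:ℝ)+2)^2/(n:ℝ))) + (1-x)) := by
    rw [hsumh]
    have hcast : ((n*(n+α+β+1) : ℕ):ℝ) = (n:ℝ)*((n:ℝ)+(α:ℝ)+(β:ℝ)+1) := by push_cast; ring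
    rw [hcast, mul_div_assoc']
    rw [le_div_iff₀ hn0]
    nlinarith [mul_nonneg (mul_nonneg (sq_nonneg ((α:ℝ)+2)) hn0.le)
      (show (0:ℝ) ≤ (n:ℝ)+(α:ℝ)+(β:ℝ) by positivity)]
  have hcore := certB_core (α:ℝ) (β:ℝ) ((n*(n+α+β+1) : ℕ):ℝ)
    (x - (1 - 30*((α:ℝ)+2)^2/(n:ℝ))) (1-x) (Nat.cast_nonneg α) hb0 hb1 hp hq
    (by rw [hsumh]; exact hhalf) hL0 hLh
  have hEq : ((n*(n+α+β+1) : ℕ):ℝ) * ((x-(1 - 30*((α:ℝ)+2)^2/(n:ℝ)))^2*(1-x))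
      + (((β:ℝ)-(α:ℝ)) - ((α:ℝ)+(β:ℝ)+2)*x) *
          ((x-(1 - 30*((α:ℝ)+2)^2/(n:ℝ)))*(2+(1 - 30*((α:ℝ)+2)^2/(n:ℝ))-3*x))
      + (1-x^2)*(2+4*(1 - 30*((α:ℝ)+2)^2/(n:ℝ))-6*x)
      = ((n*(n+α+β+1) : ℕ):ℝ)*((x-(1 - 30*((α:ℝ)+2)^2/(n:ℝ)))^2*(1-x))
        + (((α:ℝ)+(β:ℝ)+2)*(1-x)-(2*(α:ℝ)+2))*
            ((x-(1 - 30*((α:ℝ)+2)^2/(n:ℝ)))*(2*(1-x)-(x-(1 - 30*((α:ℝ)+2)^2/(n:ℝ)))))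
        + (1-x)*(2-(1-x))*(2*(1-x)-4*(x-(1 - 30*((α:ℝ)+2)^2/(n:ℝ)))) := by
    ring
  rw [hEq]
  exact hcore

private lemma choose_two_cast (m : ℕ) : (((2+m).choose 2 : ℕ) : ℝ) = ((m:ℝ)+2)*((m:ℝ)+1)/2 := by
  have h : 2 * ((2+m).choose 2) = (2+m)*(1+m) := by
    rw [Nat.choose_two_right]
    rw [show 2+m-1 = 1+m from by omega]
    have hev : 2 ∣ (2+m)*(1+m) := by
      have h2 := Nat.even_mul_succ_self (1+m)
      rw [show 1+m+1 = 2+m from by omega] at h2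
      rw [mul_comm]
      exact h2.two_dvd
    rw [Nat.mul_div_cancel' hev]
  have h' : 2 * (((2+m).choose 2 : ℕ):ℝ) = ((2+m:ℕ):ℝ)*((1+m:ℕ):ℝ) := by exact_mod_cast h
  push_cast at h'
  linarith

private lemma val1 (α : ℕ) : jacobiP 1 α 1 ((1-(α:ℝ))/((α:ℝ)+3)) = 0 := by
  have h3 : ((α:ℝ)+3) ≠ 0 := by positivity
  simp only [jacobiP, Finset.sum_range_succ, Finset.sum_range_zero]
  norm_num [Nat.choose_one_right]
  field_simp
  ring

private lemma val2_neg (α β : ℕ) :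
    jacobiP 2 α β (1 - 2*((α:ℝ)+1)/((α:ℝ)+(β:ℝ)+3)) < 0 := by
  have h3 : (0:ℝ) < (α:ℝ)+(β:ℝ)+3 := by positivity
  have e0 := choose_two_cast α
  have e2 := choose_two_cast β
  have hval : jacobiP 2 α β (1 - 2*((α:ℝ)+1)/((α:ℝ)+(β:ℝ)+3))
      = -(((β:ℝ)+2)*((α:ℝ)+1))/(2*((α:ℝ)+(β:ℝ)+3)) := by
    simp only [jacobiP, Finset.sum_range_succ, Finset.sum_range_zero]
    norm_num [Nat.choose_one_right]
    rw [e0, e2]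
    field_simp
    ring
  rw [hval]
  exact div_neg_of_neg_of_pos
    (by nlinarith [(Nat.cast_nonneg α : (0:ℝ) ≤ (α:ℝ)), (Nat.cast_nonneg β : (0:ℝ) ≤ (β:ℝ))]) (by linarith)

private lemma root1' (α : ℕ) :
    ∃ x, jacobiP 1 α 1 x = 0 ∧ 1 - x < 2*((α:ℝ)+1)/((α:ℝ)+2) := by
  refine ⟨(1-(α:ℝ))/((α:ℝ)+3), val1 α, ?_⟩
  have ha : (0:ℝ) ≤ (α:ℝ) := Nat.cast_nonneg α
  have h2 : (0:ℝ) < (α:ℝ)+2 := by linarith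
  have h3 : (0:ℝ) < (α:ℝ)+3 := by linarith
  rw [show 1 - (1-(α:ℝ))/((α:ℝ)+3) = (2*(α:ℝ)+2)/((α:ℝ)+3) from by field_simp; ring]
  rw [div_lt_div_iff₀ h3 h2]
  nlinarith

private lemma root2' (α β : ℕ) :
    ∃ x, jacobiP 2 α β x = 0 ∧ 1 - x < 2*((α:ℝ)+1)/((α:ℝ)+2) := by
  have ha : (0:ℝ) ≤ (α:ℝ) := Nat.cast_nonneg α
  have hb : (0:ℝ) ≤ (β:ℝ) := Nat.cast_nonneg β
  have h2 : (0:ℝ) < (α:ℝ)+2 := by linarith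
  have h3 : (0:ℝ) < (α:ℝ)+(β:ℝ)+3 := by linarith
  have hx0 : 1 - 2*((α:ℝ)+1)/((α:ℝ)+(β:ℝ)+3) ≤ 1 := by
    have : 0 < 2*((α:ℝ)+1)/((α:ℝ)+(β:ℝ)+3) := by positivity
    linarith
  have hIVT := intermediate_value_Ioo hx0 (continuous_jacobiP 2 α β).continuousOn
  have h0mem : (0:ℝ) ∈ Set.Ioo (jacobiP 2 α β (1 - 2*((α:ℝ)+1)/((α:ℝ)+(β:ℝ)+3)))
      (jacobiP 2 α β 1) := ⟨val2_neg α β, jacobiP_pos 2 α β le_rfl⟩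
  obtain ⟨r, hr, hr0⟩ := hIVT h0mem
  refine ⟨r, hr0, ?_⟩
  have h1 : 1 - r < 2*((α:ℝ)+1)/((α:ℝ)+(β:ℝ)+3) := by linarith [hr.1]
  have h2' : 2*((α:ℝ)+1)/((α:ℝ)+(β:ℝ)+3) ≤ 2*((α:ℝ)+1)/((α:ℝ)+2) := by
    rw [div_le_div_iff₀ h3 h2]
    nlinarith
  linarith

private lemma exists_good_root (d N : ℕ) (hd : 2 ≤ d) (hN : 1 ≤ N) :
    ∃ x, jacobiP (N/2+1) (d-2) (N%2) x = 0 ∧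
      1 - x < 2*(((d-2:ℕ):ℝ)+1)/(((d-2:ℕ):ℝ)+2) := by
  rcases Nat.lt_or_ge N 4 with h4 | h4
  · interval_cases N
    · exact root1' (d-2)
    · exact root2' (d-2) 0
    · exact root2' (d-2) 1
  · have hn3 : 3 ≤ N/2+1 := by omega
    have hβ : N%2 ≤ 1 := by omega
    obtain ⟨x, hx, hroot⟩ := rootA (N/2+1) (d-2) (N%2) hn3 hβ
    refine ⟨x, hroot, ?_⟩
    have ha : (0:ℝ) ≤ ((d-2:ℕ):ℝ) := Nat.cast_nonneg _
    have h2 : (0:ℝ) < ((d-2:ℕ):ℝ)+2 := by linarith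
    have hb : 1 + ((d-2:ℕ):ℝ)/(((d-2:ℕ):ℝ)+2) = 2*(((d-2:ℕ):ℝ)+1)/(((d-2:ℕ):ℝ)+2) := by
      field_simp
      ring
    have hneg : -((d-2:ℕ):ℝ)/(((d-2:ℕ):ℝ)+2) = -(((d-2:ℕ):ℝ)/(((d-2:ℕ):ℝ)+2)) := by
      rw [neg_div]
    have := hx.1
    rw [hneg] at this
    linarith


section Sfacts
variable (n α β : ℕ)

private def SS : Set ℝ := {y : ℝ | ∃ x : ℝ, y = 1 - x ∧ jacobiP n α β x = 0}

private lemma SS_alt : SS n α β = (fun y => jacobiP n α β (1-y)) ⁻¹' {0} := by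
  ext y
  simp only [SS, Set.mem_setOf_eq, Set.mem_preimage, Set.mem_singleton_iff]
  constructor
  · rintro ⟨x, rfl, hx⟩
    rwa [show 1-(1-x) = x from by ring]
  · intro h
    exact ⟨1-y, by ring, h⟩

private lemma SS_closed : IsClosed (SS n α β) := by
  rw [SS_alt]
  exact IsClosed.preimage ((continuous_jacobiP n α β).comp (continuous_const.sub continuous_id))
    isClosed_singleton

private lemma SS_pos : ∀ y ∈ SS n α β, 0 < y := by
  intro y hy
  rw [SS_alt] at hy
  simp only [Set.mem_preimage, Set.mem_singleton_iff] at hy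
  by_contra hc
  push_neg at hc
  exact absurd hy (ne_of_gt (jacobiP_pos n α β (by linarith)))

private lemma SS_bdd : BddBelow (SS n α β) := ⟨0, fun y hy => (SS_pos n α β y hy).le⟩

end Sfacts

private lemma eps_pos_lt (d N : ℕ) (hd : 2 ≤ d) (hN : 1 ≤ N) :
    0 < epsN d N ∧ epsN d N < 1 := by
  obtain ⟨x₀, hroot, hlt⟩ := exists_good_root d N hd hN
  have hd2 : (2:ℝ) ≤ (d:ℝ) := by exact_mod_cast hd
  have hda : ((d-2:ℕ):ℝ) = (d:ℝ) - 2 := by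
    rw [Nat.cast_sub hd]; norm_num
  have hcd : (0:ℝ) < (d:ℝ)/(2*((d:ℝ)-1)) := by
    apply div_pos <;> linarith
  have hne : (SS (N/2+1) (d-2) (N%2)).Nonempty := ⟨1-x₀, x₀, rfl, hroot⟩
  have hmem := (SS_closed (N/2+1) (d-2) (N%2)).csInf_mem hne (SS_bdd _ _ _)
  have hInfPos : 0 < sInf (SS (N/2+1) (d-2) (N%2)) := SS_pos _ _ _ _ hmem
  have hInfLe : sInf (SS (N/2+1) (d-2) (N%2)) ≤ 1 - x₀ :=
    csInf_le (SS_bdd _ _ _) ⟨x₀, rfl, hroot⟩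
  have hEps : epsN d N = (d:ℝ)/(2*((d:ℝ)-1)) * sInf (SS (N/2+1) (d-2) (N%2)) := rfl
  constructor
  · rw [hEps]
    exact mul_pos hcd hInfPos
  · rw [hEps]
    have hbeq : 2*(((d-2:ℕ):ℝ)+1)/(((d-2:ℕ):ℝ)+2) = 2*((d:ℝ)-1)/(d:ℝ) := by
      rw [hda]; ring_nf
    have h2 : sInf (SS (N/2+1) (d-2) (N%2)) < 2*((d:ℝ)-1)/(d:ℝ) := by
      rw [← hbeq]; linarith
    calc (d:ℝ)/(2*((d:ℝ)-1)) * sInf (SS (N/2+1) (d-2) (N%2))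
        < (d:ℝ)/(2*((d:ℝ)-1)) * (2*((d:ℝ)-1)/(d:ℝ)) := mul_lt_mul_of_pos_left h2 hcd
      _ = 1 := by
        rw [div_mul_div_comm, div_eq_one_iff_eq (by nlinarith : (2*((d:ℝ)-1))*(d:ℝ) ≠ 0)]
        ring

private lemma eps_tendsto (d : ℕ) (hd : 2 ≤ d) :
    Filter.Tendsto (fun N : ℕ => epsN d N) Filter.atTop (nhds 0) := by
  have hd2 : (2:ℝ) ≤ (d:ℝ) := by exact_mod_cast hd
  have hda : ((d-2:ℕ):ℝ) = (d:ℝ) - 2 := by rw [Nat.cast_sub hd]; norm_num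
  have hcd : (0:ℝ) < (d:ℝ)/(2*((d:ℝ)-1)) := by apply div_pos <;> linarith
  set C : ℝ := (d:ℝ)/(2*((d:ℝ)-1)) * (60*(d:ℝ)^2) with hC
  apply tendsto_of_tendsto_of_tendsto_of_le_of_le' (g := fun _ : ℕ => (0:ℝ))
    (h := fun N : ℕ => C/(N:ℝ)) tendsto_const_nhds (tendsto_const_div_atTop_nhds_zero_nat C)
  · filter_upwards [Filter.eventually_ge_atTop 1] with N hN
    exact (eps_pos_lt d N hd hN).1.le
  · filter_upwards [Filter.eventually_ge_atTop (max 1 (120*d^2))] with N hN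
    have hN1 : 1 ≤ N := le_trans (le_max_left _ _) hN
    have hNd : 120*d^2 ≤ N := le_trans (le_max_right _ _) hN
    have hn60 : 60*d^2 ≤ N/2+1 := by omega
    have had2 : ((d-2:ℕ):ℝ) + 2 = (d:ℝ) := by rw [hda]; ring
    have hbig : 60*(((d-2:ℕ):ℝ)+2)^2 ≤ ((N/2+1 : ℕ):ℝ) := by
      rw [had2]
      calc (60:ℝ)*(d:ℝ)^2 = ((60*d^2 : ℕ):ℝ) := by push_cast; ring
        _ ≤ _ := by exact_mod_cast hn60
    obtain ⟨x, hx, hroot⟩ := rootB (N/2+1) (d-2) (N%2) (by omega) (by omega) hbig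
    have hInfLe : sInf (SS (N/2+1) (d-2) (N%2)) ≤ 1 - x :=
      csInf_le (SS_bdd _ _ _) ⟨x, rfl, hroot⟩
    have hn0 : (0:ℝ) < ((N/2+1:ℕ):ℝ) := by positivity
    have hxh : 1 - x ≤ 30*(((d-2:ℕ):ℝ)+2)^2/((N/2+1:ℕ):ℝ) := by linarith [hx.1]
    have hEps : epsN d N = (d:ℝ)/(2*((d:ℝ)-1)) * sInf (SS (N/2+1) (d-2) (N%2)) := rfl
    have hNpos : (0:ℝ) < (N:ℝ) := by exact_mod_cast hN1
    have hnN : (N:ℝ) ≤ 2*((N/2+1:ℕ):ℝ) := by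
      have : N ≤ 2*(N/2+1) := by omega
      exact_mod_cast this
    have hfrac : 30*(((d-2:ℕ):ℝ)+2)^2/((N/2+1:ℕ):ℝ) ≤ 60*(d:ℝ)^2/(N:ℝ) := by
      rw [had2, div_le_div_iff₀ hn0 hNpos]
      nlinarith [sq_nonneg (d:ℝ)]
    rw [hEps]
    calc (d:ℝ)/(2*((d:ℝ)-1)) * sInf (SS (N/2+1) (d-2) (N%2))
        ≤ (d:ℝ)/(2*((d:ℝ)-1)) * (60*(d:ℝ)^2/(N:ℝ)) := by
          apply mul_le_mul_of_nonneg_left _ hcd.le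
          linarith
      _ = C/(N:ℝ) := by rw [hC]; ring


end JacobiAux

/-- for `d ≥ 2`, one has `0 < ε_N < 1` for every `N ≥ 1`,
and `ε_N → 0` as `N → ∞`. -/
theorem stmt16 (d : ℕ) (hd : 2 ≤ d) :
    (∀ N : ℕ, 1 ≤ N → 0 < epsN d N ∧ epsN d N < 1) ∧
    Filter.Tendsto (fun N : ℕ => epsN d N) Filter.atTop (nhds 0) :=
  ⟨fun N hN => eps_pos_lt d N hd hN, eps_tendsto d hd⟩

end SepPaper
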